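/- In the proof of the entropy-splitting lemma, for i > j the following bound holds: if ∑_z P_Z(z) · max_{x_i,x_j} P[X_i = x_i, X_j = x_j | Z = z] ≤ 2^{−α}, and V is the random variable such that the event V = j implies P[X_j = x_j | Z = z] ≥ 2^{−α/2} for the realized values x_j, z, then ∑_z P_Z(z) · max_{x_i} ∑_{x_j} P[X_i = x_i, X_j = x_j, V = j | Z = z] ≤ 2^{−α/2}. The key step: for each z there are at most 2^{α/2} values x_j with P[X_j = x_j | Z = z] ≥ 2^{−α/2}. -/

import Mathlib

open Finset

/-- Key step in the entropy-splitting lemma (case `i > j`): if the pair `(X_i, X_j)`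
has min-entropy at least `α` given `Z`, and the event `A` (i.e. `V = j`) implies that
the realized value of `X_j` is "heavy" given `Z` (conditional probability at least
`2^{-α/2}`), then `∑_z max_{x_i} ∑_{x_j} P[X_i = x_i, X_j = x_j, A, Z = z] ≤ 2^{-α/2}`.
The key counting fact: for each `z` there are at most `2^{α/2}` heavy values `x_j`. -/
theorem entropy_splitting_key_step
    {Ω 𝒳i 𝒳j 𝒵 : Type*} [Fintype Ω] [Fintype 𝒳i] [Fintype 𝒳j] [Fintype 𝒵]
    [Nonempty 𝒳i] [Nonempty 𝒳j] [DecidableEq 𝒳i] [DecidableEq 𝒳j] [DecidableEq 𝒵]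
    (p : Ω → ℝ) (hp : ∀ ω, 0 ≤ p ω) (hsum : ∑ ω, p ω = 1)
    (Xi : Ω → 𝒳i) (Xj : Ω → 𝒳j) (Z : Ω → 𝒵) (A : Ω → Prop) [DecidablePred A]
    (α : ℝ)
    (hα : ∑ z, (univ : Finset (𝒳i × 𝒳j)).sup' univ_nonempty (fun xx =>
        ∑ ω ∈ univ.filter (fun ω => Xi ω = xx.1 ∧ Xj ω = xx.2 ∧ Z ω = z), p ω)
        ≤ (2:ℝ) ^ (-α))
    (hA : ∀ ω, A ω →
      (2:ℝ) ^ (-α/2) * (∑ ω' ∈ univ.filter (fun ω' => Z ω' = Z ω), p ω')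
        ≤ ∑ ω' ∈ univ.filter (fun ω' => Xj ω' = Xj ω ∧ Z ω' = Z ω), p ω') :
    ∑ z, (univ : Finset 𝒳i).sup' univ_nonempty (fun xi =>
        ∑ xj, ∑ ω ∈ univ.filter
          (fun ω => Xi ω = xi ∧ Xj ω = xj ∧ A ω ∧ Z ω = z), p ω)
      ≤ (2:ℝ) ^ (-α/2) := by
  -- notation
  set M : 𝒵 → ℝ := fun z => (univ : Finset (𝒳i × 𝒳j)).sup' univ_nonempty (fun xx =>
        ∑ ω ∈ univ.filter (fun ω => Xi ω = xx.1 ∧ Xj ω = xx.2 ∧ Z ω = z), p ω) with hM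
  have hMnonneg : ∀ z, 0 ≤ M z := by
    intro z
    refine le_trans ?_ (Finset.le_sup' _ (Finset.mem_univ (Classical.arbitrary _)))
    exact Finset.sum_nonneg fun ω _ => hp ω
  -- per-z bound
  have key : ∀ z, (univ : Finset 𝒳i).sup' univ_nonempty (fun xi =>
        ∑ xj, ∑ ω ∈ univ.filter
          (fun ω => Xi ω = xi ∧ Xj ω = xj ∧ A ω ∧ Z ω = z), p ω)
      ≤ (2:ℝ) ^ (α/2) * M z := by
    intro z
    apply Finset.sup'_le
    intro xi _
    set Pz : ℝ := ∑ ω ∈ univ.filter (fun ω => Z ω = z), p ω with hPz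
    set H : Finset 𝒳j := univ.filter (fun xj =>
      (2:ℝ) ^ (-α/2) * Pz ≤ ∑ ω ∈ univ.filter (fun ω => Xj ω = xj ∧ Z ω = z), p ω)
      with hH
    -- terms with xj ∉ H vanish
    have hzero : ∀ xj ∉ H, (∑ ω ∈ univ.filter
          (fun ω => Xi ω = xi ∧ Xj ω = xj ∧ A ω ∧ Z ω = z), p ω) = 0 := by
      intro xj hxj
      apply Finset.sum_eq_zero
      intro ω hω
      simp only [Finset.mem_filter, Finset.mem_univ, true_and] at hω
      exfalso
      apply hxj
      simp only [hH, Finset.mem_filter, Finset.mem_univ, true_and]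
      have := hA ω hω.2.2.1
      rw [hω.2.1, hω.2.2.2] at this
      exact this
    have hstep : (∑ xj, ∑ ω ∈ univ.filter
          (fun ω => Xi ω = xi ∧ Xj ω = xj ∧ A ω ∧ Z ω = z), p ω)
        = ∑ xj ∈ H, ∑ ω ∈ univ.filter
          (fun ω => Xi ω = xi ∧ Xj ω = xj ∧ A ω ∧ Z ω = z), p ω := by
      rw [← Finset.sum_subset (Finset.subset_univ H)]
      intro xj _ hxj
      exact hzero xj hxj
    rw [hstep]
    -- each term is at most M z
    have hterm : ∀ xj ∈ H, (∑ ω ∈ univ.filter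
          (fun ω => Xi ω = xi ∧ Xj ω = xj ∧ A ω ∧ Z ω = z), p ω) ≤ M z := by
      intro xj _
      refine le_trans ?_ (Finset.le_sup' _ (Finset.mem_univ (xi, xj)))
      apply Finset.sum_le_sum_of_subset_of_nonneg
      · intro ω hω
        simp only [Finset.mem_filter, Finset.mem_univ, true_and] at hω ⊢
        exact ⟨hω.1, hω.2.1, hω.2.2.2⟩
      · intro ω _ _; exact hp ω
    have h1 : (∑ xj ∈ H, ∑ ω ∈ univ.filter
          (fun ω => Xi ω = xi ∧ Xj ω = xj ∧ A ω ∧ Z ω = z), p ω)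
        ≤ (H.card : ℝ) * M z := by
      calc _ ≤ ∑ _xj ∈ H, M z := Finset.sum_le_sum hterm
        _ = (H.card : ℝ) * M z := by rw [Finset.sum_const, nsmul_eq_mul]
    refine h1.trans ?_
    -- card bound
    by_cases hPz0 : Pz = 0
    · -- all summands with Z ω = z vanish, hence M z = 0... instead show LHS = 0 directly
      have hzero' : ∀ ω, Z ω = z → p ω = 0 := by
        intro ω hωz
        have : p ω ≤ Pz := Finset.single_le_sum (fun ω' _ => hp ω')
          (by simp [hωz])
        have := le_antisymm (hPz0 ▸ this) (hp ω)
        exact this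
      have hM0 : M z = 0 := by
        apply le_antisymm
        · apply Finset.sup'_le
          intro xx _
          apply le_of_eq
          apply Finset.sum_eq_zero
          intro ω hω
          simp only [Finset.mem_filter] at hω
          exact hzero' ω hω.2.2.2
        · exact hMnonneg z
      rw [hM0, mul_zero, mul_zero]
    · have hPzpos : 0 < Pz := lt_of_le_of_ne
        (Finset.sum_nonneg fun ω _ => hp ω) (Ne.symm hPz0)
      -- ∑_{xj ∈ H} fiber ≤ Pz
      have hfiber : (∑ xj ∈ H, ∑ ω ∈ univ.filter
            (fun ω => Xj ω = xj ∧ Z ω = z), p ω) ≤ Pz := by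
        have he : (∑ xj ∈ (univ : Finset 𝒳j), ∑ ω ∈ univ.filter
            (fun ω => Xj ω = xj ∧ Z ω = z), p ω) = Pz := by
          rw [hPz]
          rw [← Finset.sum_fiberwise (univ.filter (fun ω => Z ω = z)) Xj p]
          apply Finset.sum_congr rfl
          intro xj _
          apply Finset.sum_congr _ (fun _ _ => rfl)
          ext ω
          simp [and_comm]
        rw [← he]
        apply Finset.sum_le_sum_of_subset_of_nonneg (Finset.subset_univ H)
        intro xj _ _
        exact Finset.sum_nonneg fun ω _ => hp ω
      have hcardPz : (H.card : ℝ) * ((2:ℝ) ^ (-α/2) * Pz) ≤ Pz := by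
        calc (H.card : ℝ) * ((2:ℝ) ^ (-α/2) * Pz)
            = ∑ _xj ∈ H, (2:ℝ) ^ (-α/2) * Pz := by
              rw [Finset.sum_const, nsmul_eq_mul]
          _ ≤ ∑ xj ∈ H, ∑ ω ∈ univ.filter (fun ω => Xj ω = xj ∧ Z ω = z), p ω := by
              apply Finset.sum_le_sum
              intro xj hxj
              simpa [hH] using (Finset.mem_filter.mp hxj).2
          _ ≤ Pz := hfiber
      have hcard : (H.card : ℝ) ≤ (2:ℝ) ^ (α/2) := by
        have h2 : (0:ℝ) < (2:ℝ) ^ (-α/2) := Real.rpow_pos_of_pos (by norm_num) _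
        have hc1 : (H.card : ℝ) * (2:ℝ) ^ (-α/2) ≤ 1 :=
          le_of_mul_le_mul_right (by rw [one_mul, mul_assoc]; exact hcardPz) hPzpos
        have hinv : (2:ℝ) ^ (α/2) * (2:ℝ) ^ (-α/2) = 1 := by
          rw [← Real.rpow_add (by norm_num), show α/2 + -α/2 = 0 by ring, Real.rpow_zero]
        exact le_of_mul_le_mul_right (by rw [hinv]; exact hc1) h2
      exact mul_le_mul_of_nonneg_right hcard (hMnonneg z)
  calc ∑ z, (univ : Finset 𝒳i).sup' univ_nonempty (fun xi =>
        ∑ xj, ∑ ω ∈ univ.filter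
          (fun ω => Xi ω = xi ∧ Xj ω = xj ∧ A ω ∧ Z ω = z), p ω)
      ≤ ∑ z, (2:ℝ) ^ (α/2) * M z := Finset.sum_le_sum fun z _ => key z
    _ = (2:ℝ) ^ (α/2) * ∑ z, M z := by rw [Finset.mul_sum]
    _ ≤ (2:ℝ) ^ (α/2) * (2:ℝ) ^ (-α) := by
        apply mul_le_mul_of_nonneg_left hα (Real.rpow_nonneg (by norm_num) _)
    _ = (2:ℝ) ^ (-α/2) := by
        rw [← Real.rpow_add (by norm_num)]; congr 1; ring
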